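/- Let ν be a probability measure on ℝ^d, let σ ∈ (0, 1], and let f, F̲ : ℝ^d → ℝ and F̄ : ℝ^d → ℝ ∪ {+∞} be measurable with F̲(x) ≤ f(x) ≤ F̄(x) for all x. Assume z_* := ∫ e^{−F̄(x)} ν(dx) > 0, and let m be the Gibbs measure of f at temperature σ relative to ν, i.e. Z := ∫ e^{−f(x)/σ} ν(dx) ∈ (0, ∞) and m(A) = Z⁻¹ ∫_A e^{−f(x)/σ} ν(dx) for every Borel set A. Then for every k ∈ ℝ: m({x : F̲(x) > k}) ≤ (e^{−k}/z_*)^{1/σ}. -/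

import Mathlib

open MeasureTheory
open scoped ENNReal

/-- `m` is the Gibbs measure of `f` at temperature `σ` relative to `ν`:
`Z := ∫ e^{−f/σ} dν ∈ (0, ∞)` and `m(A) = Z⁻¹ ∫_A e^{−f/σ} dν` for every Borel `A`. -/
def IsGibbsMeasure {d : ℕ} (ν : Measure (EuclideanSpace ℝ (Fin d))) (σ : ℝ)
    (f : EuclideanSpace ℝ (Fin d) → ℝ) (m : Measure (EuclideanSpace ℝ (Fin d))) : Prop :=
  Integrable (fun x => Real.exp (-(f x) / σ)) ν ∧
  0 < ∫ x, Real.exp (-(f x) / σ) ∂ν ∧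
  ∀ A : Set (EuclideanSpace ℝ (Fin d)), MeasurableSet A →
    m A = ENNReal.ofReal
      ((∫ x in A, Real.exp (-(f x) / σ) ∂ν) / ∫ x, Real.exp (-(f x) / σ) ∂ν)

/-- Tail bound for the Gibbs measure: if `F̲ ≤ f ≤ F̄`,
`z_* := ∫ e^{−F̄} dν > 0` and `σ ∈ (0,1]`, then
`m{F̲ > k} ≤ (e^{−k}/z_*)^{1/σ}` for every `k`. -/
theorem stmt6 {d : ℕ} (ν : Measure (EuclideanSpace ℝ (Fin d))) [IsProbabilityMeasure ν]
    (σ : ℝ) (hσ0 : 0 < σ) (hσ1 : σ ≤ 1)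
    (f Flo : EuclideanSpace ℝ (Fin d) → ℝ) (Fhi : EuclideanSpace ℝ (Fin d) → EReal)
    (hfmeas : Measurable f) (hFlomeas : Measurable Flo) (hFhimeas : Measurable Fhi)
    (hsand : ∀ x, Flo x ≤ f x ∧ (f x : EReal) ≤ Fhi x)
    (hzs : 0 < ∫⁻ x, EReal.exp (-(Fhi x)) ∂ν)
    (m : Measure (EuclideanSpace ℝ (Fin d))) (hm : IsGibbsMeasure ν σ f m) (k : ℝ) :
    m {x | k < Flo x}
      ≤ (ENNReal.ofReal (Real.exp (-k)) / ∫⁻ x, EReal.exp (-(Fhi x)) ∂ν) ^ (1 / σ) := by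
  obtain ⟨hint, hZpos, hmeq⟩ := hm
  set Z : ℝ := ∫ x, Real.exp (-(f x) / σ) ∂ν with hZ
  set zs : ℝ≥0∞ := ∫⁻ x, EReal.exp (-(Fhi x)) ∂ν with hzsdef
  have hA : MeasurableSet {x | k < Flo x} := measurableSet_lt measurable_const hFlomeas
  -- Step 1: numerator bound
  have hnum : (∫ x in {x | k < Flo x}, Real.exp (-(f x) / σ) ∂ν) ≤ Real.exp (-k / σ) := by
    have h1 : (∫ x in {x | k < Flo x}, Real.exp (-(f x) / σ) ∂ν)
        ≤ ∫ _x in {x | k < Flo x}, Real.exp (-k / σ) ∂ν := by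
      refine setIntegral_mono_on hint.integrableOn (integrableOn_const ?_) hA ?_
      · exact (measure_lt_top ν _).ne
      · intro x hx
        have hk : k ≤ f x := le_of_lt (lt_of_lt_of_le hx (hsand x).1)
        have : -(f x) / σ ≤ -k / σ := by gcongr
        exact Real.exp_le_exp.2 this
    have h2 : (∫ _x in {x | k < Flo x}, Real.exp (-k / σ) ∂ν)
        = (ν {x | k < Flo x}).toReal * Real.exp (-k / σ) := by
      rw [setIntegral_const, smul_eq_mul]; rfl
    have h3 : (ν {x | k < Flo x}).toReal ≤ 1 := by
      have := prob_le_one (μ := ν) (s := {x | k < Flo x})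
      simpa using ENNReal.toReal_mono ENNReal.one_ne_top this
    nlinarith [Real.exp_pos (-k / σ)]
  -- Step 2: lintegral form of Z
  have hZ' : ENNReal.ofReal Z
      = ∫⁻ x, ENNReal.ofReal (Real.exp (-(f x) / σ)) ∂ν :=
    ofReal_integral_eq_lintegral_ofReal hint (ae_of_all _ fun x => (Real.exp_pos _).le)
  -- Step 3: Jensen: zs ≤ (ofReal Z) ^ σ
  have hjensen : zs ≤ (ENNReal.ofReal Z) ^ σ := by
    have hstep1 : zs ≤ ∫⁻ x, ENNReal.ofReal (Real.exp (-(f x))) ∂ν := by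
      refine lintegral_mono fun x => ?_
      have h : -(Fhi x) ≤ ((-(f x) : ℝ) : EReal) := by
        rw [EReal.coe_neg]
        exact EReal.neg_le_neg_iff.2 (hsand x).2
      calc EReal.exp (-(Fhi x)) ≤ EReal.exp ((-(f x) : ℝ) : EReal) := EReal.exp_monotone h
        _ = ENNReal.ofReal (Real.exp (-(f x))) := EReal.exp_coe _
    have hstep2 : (∫⁻ x, ENNReal.ofReal (Real.exp (-(f x))) ∂ν)
        ≤ (∫⁻ x, ENNReal.ofReal (Real.exp (-(f x) / σ)) ∂ν) ^ σ := by
      have hmono := eLpNorm'_le_eLpNorm'_of_exponent_le (f := fun x => Real.exp (-(f x)))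
        (p := 1) (q := 1 / σ) one_pos (by
          rw [le_div_iff₀ hσ0, one_mul]; exact hσ1) ν
        ((hfmeas.neg.exp).aestronglyMeasurable)
      simp only [eLpNorm'] at hmono
      have hL : (∫⁻ x, ‖Real.exp (-(f x))‖ₑ ^ (1 : ℝ) ∂ν) ^ (1 / (1:ℝ))
          = ∫⁻ x, ENNReal.ofReal (Real.exp (-(f x))) ∂ν := by
        simp only [ENNReal.rpow_one, one_div_one]
        refine lintegral_congr fun x => ?_
        rw [Real.enorm_eq_ofReal (Real.exp_pos _).le]
      have hR : (∫⁻ x, ‖Real.exp (-(f x))‖ₑ ^ (1 / σ) ∂ν) ^ (1 / (1 / σ))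
          = (∫⁻ x, ENNReal.ofReal (Real.exp (-(f x) / σ)) ∂ν) ^ σ := by
        rw [one_div_one_div]
        congr 1
        refine lintegral_congr fun x => ?_
        rw [Real.enorm_eq_ofReal (Real.exp_pos _).le,
          ENNReal.ofReal_rpow_of_pos (Real.exp_pos _),
          ← Real.exp_mul, mul_one_div]
      rw [hL, hR] at hmono
      exact hmono
    exact hstep1.trans (by rw [hZ']; exact hstep2)
  -- Step 4: from Jensen, zs ^ (1/σ) ≤ ofReal Z
  have hzZ : zs ^ (1 / σ) ≤ ENNReal.ofReal Z := by
    have := ENNReal.rpow_le_rpow hjensen (le_of_lt (by positivity : (0:ℝ) < 1 / σ))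
    rwa [← ENNReal.rpow_mul, mul_one_div, div_self hσ0.ne', ENNReal.rpow_one] at this
  -- Step 5: combine
  rw [hmeq _ hA]
  calc ENNReal.ofReal ((∫ x in {x | k < Flo x}, Real.exp (-(f x) / σ) ∂ν) / Z)
      ≤ ENNReal.ofReal (Real.exp (-k / σ) / Z) := by
        apply ENNReal.ofReal_le_ofReal
        gcongr
    _ = ENNReal.ofReal (Real.exp (-k / σ)) / ENNReal.ofReal Z := by
        rw [ENNReal.ofReal_div_of_pos hZpos]
    _ ≤ ENNReal.ofReal (Real.exp (-k / σ)) / zs ^ (1 / σ) := by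
        exact ENNReal.div_le_div_left hzZ _
    _ = (ENNReal.ofReal (Real.exp (-k)) / zs) ^ (1 / σ) := by
        rw [ENNReal.div_rpow_of_nonneg _ _ (by positivity)]
        congr 1
        rw [ENNReal.ofReal_rpow_of_pos (Real.exp_pos _), ← Real.exp_mul,
          neg_mul, mul_one_div, neg_div]
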